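/- Let 0 ≤ s₁ < s₂ < … < s_N ≤ 1 and let f₁,…,f_s ∈ L²([0,1]) be an orthonormal family contained in the linear span of 𝟙_{[s₁,s₂]}, …, 𝟙_{[s_{N−1},s_N]}. Then for every k ≥ 2 there exists a constant c > 0, depending on s₁,…,s_N, such that for all (t₁,…,t_k) ∈ Δ_k, G(𝟙_{[t₁,t₂]}, …, 𝟙_{[t_{k−1},t_k]}, f₁, …, f_s) ≥ c · G(𝟙_{[t₁,t₂]}, …, 𝟙_{[t_{k−1},t_k]}, 𝟙_{[s₁,s₂]}, …, 𝟙_{[s_{N−1},s_N]}). -/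

import Mathlib

open MeasureTheory

noncomputable def μ01 : Measure ℝ := volume.restrict (Set.Icc 0 1)

noncomputable abbrev L2 : Type := Lp ℝ 2 μ01

lemma μ01_Icc_ne_top (a b : ℝ) : μ01 (Set.Icc a b) ≠ ⊤ :=
  ((Measure.restrict_apply_le _ _).trans_lt measure_Icc_lt_top).ne

/-- The element of `L²([0,1])` given by the indicator of `[a,b]`. -/
noncomputable def ind (a b : ℝ) : L2 :=
  indicatorConstLp 2 measurableSet_Icc (μ01_Icc_ne_top a b) (1 : ℝ)

/-- Gram determinant of a finite family of vectors. -/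
noncomputable def gram {H : Type*} [NormedAddCommGroup H] [InnerProductSpace ℝ H]
    {n : ℕ} (v : Fin n → H) : ℝ :=
  (Matrix.of fun i j => (inner ℝ (v i) (v j) : ℝ)).det

open Matrix

section GramLemmas

variable {H : Type*} [NormedAddCommGroup H] [InnerProductSpace ℝ H]

lemma gram_comp_equiv {n m : ℕ} (e : Fin n ≃ Fin m) (v : Fin m → H) :
    gram (v ∘ e) = gram v := by
  have h : (Matrix.of fun i j => (inner ℝ ((v ∘ e) i) ((v ∘ e) j) : ℝ))
      = (Matrix.of fun i j => (inner ℝ (v i) (v j) : ℝ)).submatrix e e := rfl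
  rw [_root_.gram, h, Matrix.det_submatrix_equiv_self, _root_.gram]

lemma gram_append_comm {m n : ℕ} (a : Fin m → H) (b : Fin n → H) :
    gram (Fin.append a b) = gram (Fin.append b a) := by
  have h : Fin.append b a ∘ (finAddFlip : Fin (m + n) ≃ Fin (n + m)) = Fin.append a b := by
    funext i
    refine Fin.addCases (fun i => ?_) (fun i => ?_) i
    · simp [finAddFlip_apply_castAdd]
    · simp [finAddFlip_apply_natAdd]
  rw [← h, gram_comp_equiv]

lemma gram_orthonormal {n : ℕ} {f : Fin n → H} (hf : Orthonormal ℝ f) : gram f = 1 := by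
  have h : (Matrix.of fun i j => (inner ℝ (f i) (f j) : ℝ)) = 1 := by
    ext i j
    rw [orthonormal_iff_ite] at hf
    simp [hf i j, Matrix.one_apply]
  rw [_root_.gram, h, Matrix.det_one]

lemma det_updateRow_last_sum {n : ℕ} (M : Matrix (Fin (n + 1)) (Fin (n + 1)) ℝ)
    (c : Fin n → ℝ) :
    (M.updateRow (Fin.last n) (M (Fin.last n) + ∑ i, c i • M i.castSucc)).det = M.det := by
  classical
  have key : ∀ s : Finset (Fin n),
      (M.updateRow (Fin.last n) (M (Fin.last n) + ∑ i ∈ s, c i • M i.castSucc)).det = M.det := by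
    intro s
    induction s using Finset.induction_on with
    | empty => simp
    | @insert a s ha ih =>
      have hne : (a : Fin n).castSucc ≠ Fin.last n := (Fin.castSucc_lt_last a).ne
      have h2 : M.updateRow (Fin.last n) (M (Fin.last n) + ∑ i ∈ insert a s, c i • M i.castSucc)
          = (M.updateRow (Fin.last n) (M (Fin.last n) + ∑ i ∈ s, c i • M i.castSucc)).updateRow
              (Fin.last n)
              ((M.updateRow (Fin.last n) (M (Fin.last n) + ∑ i ∈ s, c i • M i.castSucc))
                (Fin.last n)
              + c a • (M.updateRow (Fin.last n)
                  (M (Fin.last n) + ∑ i ∈ s, c i • M i.castSucc)) a.castSucc) := by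
        rw [Matrix.updateRow_self, Matrix.updateRow_ne hne]
        ext i j
        rcases eq_or_ne i (Fin.last n) with rfl | hi
        · simp [Finset.sum_insert ha]
          ring
        · simp [Matrix.updateRow_ne hi]
      rw [h2, Matrix.det_updateRow_add_smul_self _ hne.symm, ih]
  exact key Finset.univ

lemma det_updateCol_last_sum {n : ℕ} (M : Matrix (Fin (n + 1)) (Fin (n + 1)) ℝ)
    (c : Fin n → ℝ) :
    (M.updateCol (Fin.last n)
      (fun r => M r (Fin.last n) + ∑ i, c i • M r i.castSucc)).det = M.det := by
  have h : M.updateCol (Fin.last n)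
        (fun r => M r (Fin.last n) + ∑ i, c i • M r i.castSucc)
      = (Mᵀ.updateRow (Fin.last n) (Mᵀ (Fin.last n) + ∑ i, c i • Mᵀ i.castSucc))ᵀ := by
    rw [Matrix.updateRow_transpose, Matrix.transpose_transpose]
    ext r j
    rcases eq_or_ne j (Fin.last n) with rfl | hj
    · simp [Matrix.updateCol_self, Finset.sum_apply]
    · simp [Matrix.updateCol_ne hj]
  rw [h, Matrix.det_transpose, det_updateRow_last_sum, Matrix.det_transpose]

lemma gram_snoc_add_combo {n : ℕ} (w : Fin n → H) (x : H) (c : Fin n → ℝ) :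
    gram (Fin.snoc w (x + ∑ i, c i • w i)) = gram (Fin.snoc w x) := by
  classical
  set M : Matrix (Fin (n + 1)) (Fin (n + 1)) ℝ :=
    Matrix.of fun i j => (inner ℝ ((Fin.snoc w x : Fin (n+1) → H) i) ((Fin.snoc w x : Fin (n+1) → H) j) : ℝ) with hM
  set M' : Matrix (Fin (n + 1)) (Fin (n + 1)) ℝ :=
    M.updateRow (Fin.last n) (M (Fin.last n) + ∑ i, c i • M i.castSucc) with hM'
  have key : (Matrix.of fun i j =>
      (inner ℝ ((Fin.snoc w (x + ∑ i, c i • w i) : Fin (n+1) → H) i) ((Fin.snoc w (x + ∑ i, c i • w i) : Fin (n+1) → H) j) : ℝ))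
      = M'.updateCol (Fin.last n)
          (fun r => M' r (Fin.last n) + ∑ i, c i • M' r i.castSucc) := by
    ext i j
    refine Fin.lastCases ?_ (fun i => ?_) i <;> refine Fin.lastCases ?_ (fun j => ?_) j
    · -- (last, last)
      simp only [Matrix.of_apply, Fin.snoc_last, Matrix.updateCol_self, hM',
        Matrix.updateRow_self, Pi.add_apply, Finset.sum_apply, Pi.smul_apply, smul_eq_mul,
        Matrix.updateRow_ne (Fin.castSucc_lt_last _).ne, hM, Fin.snoc_castSucc]
      rw [inner_add_add_self]
      rw [sum_inner, inner_sum]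
      simp only [real_inner_smul_left, real_inner_smul_right]
      rw [real_inner_comm x]
      have hD : (inner ℝ (∑ i, c i • w i) (∑ i, c i • w i) : ℝ)
          = ∑ i, c i * ∑ j, c j * (inner ℝ (w j) (w i) : ℝ) := by
        rw [inner_sum]
        refine Finset.sum_congr rfl fun i _ => ?_
        rw [real_inner_smul_right]
        congr 1
        rw [sum_inner]
        refine Finset.sum_congr rfl fun j _ => ?_
        rw [real_inner_smul_left]
      rw [hD]
      simp only [mul_add, Finset.sum_add_distrib]
      ring
    · -- (last, castSucc j)
      simp only [Matrix.of_apply, Fin.snoc_last, Fin.snoc_castSucc,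
        Matrix.updateCol_ne (Fin.castSucc_lt_last _).ne, hM', Matrix.updateRow_self,
        Pi.add_apply, Finset.sum_apply, Pi.smul_apply, smul_eq_mul, hM]
      rw [inner_add_left, sum_inner]
      simp [real_inner_smul_left]
    · -- (castSucc i, last)
      simp only [Matrix.of_apply, Fin.snoc_last, Fin.snoc_castSucc, Matrix.updateCol_self,
        hM', Matrix.updateRow_ne (Fin.castSucc_lt_last _).ne, hM, Matrix.of_apply,
        Fin.snoc_castSucc, Fin.snoc_last, Pi.add_apply, Finset.sum_apply, Pi.smul_apply,
        smul_eq_mul]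
      rw [inner_add_right, inner_sum]
      simp [real_inner_smul_right]
    · -- (castSucc i, castSucc j)
      simp only [Matrix.of_apply, Fin.snoc_castSucc,
        Matrix.updateCol_ne (Fin.castSucc_lt_last _).ne, hM',
        Matrix.updateRow_ne (Fin.castSucc_lt_last _).ne, hM]
  rw [_root_.gram, key, det_updateCol_last_sum, hM', det_updateRow_last_sum, _root_.gram]

lemma gram_snoc_orthogonal {n : ℕ} (w : Fin n → H) (z : H)
    (hz : ∀ i, (inner ℝ (w i) z : ℝ) = 0) :
    gram (Fin.snoc w z) = gram w * ‖z‖ ^ 2 := by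
  classical
  set A : Matrix (Fin (n + 1)) (Fin (n + 1)) ℝ :=
    Matrix.of fun i j => (inner ℝ ((Fin.snoc w z : Fin (n+1) → H) i)
      ((Fin.snoc w z : Fin (n+1) → H) j) : ℝ) with hA
  have hrow : ∀ j : Fin n, A (Fin.last n) j.castSucc = 0 := by
    intro j
    simp only [hA, Matrix.of_apply, Fin.snoc_last, Fin.snoc_castSucc]
    rw [real_inner_comm]
    exact hz j
  rw [_root_.gram, Matrix.det_succ_row A (Fin.last n)]
  rw [Finset.sum_eq_single (Fin.last n)]
  · have h1 : A (Fin.last n) (Fin.last n) = ‖z‖ ^ 2 := by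
      simp only [hA, Matrix.of_apply, Fin.snoc_last]
      exact real_inner_self_eq_norm_sq z
    have h2 : A.submatrix (Fin.last n).succAbove (Fin.last n).succAbove
        = Matrix.of fun i j => (inner ℝ (w i) (w j) : ℝ) := by
      ext i j
      simp [hA, Fin.succAbove_last]
    have h3 : (-1 : ℝ) ^ ((Fin.last n : ℕ) + (Fin.last n : ℕ)) = 1 :=
      Even.neg_one_pow ⟨n, by simp [Fin.val_last]⟩
    rw [h1, h2, h3, _root_.gram]
    ring
  · intro j _ hj
    have : ∃ j' : Fin n, j = j'.castSucc := ⟨j.castPred hj, (Fin.castSucc_castPred j hj).symm⟩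
    obtain ⟨j', rfl⟩ := this
    rw [hrow j']
    ring
  · intro h
    exact absurd (Finset.mem_univ _) h

lemma gram_snoc {n : ℕ} (w : Fin n → H) (x : H) {K : Submodule ℝ H}
    [K.HasOrthogonalProjection] (hK : Submodule.span ℝ (Set.range w) = K) :
    gram (Fin.snoc w x) = gram w * ‖x - (K.orthogonalProjectionOnto x : H)‖ ^ 2 := by
  classical
  set y : H := (K.orthogonalProjectionOnto x : H) with hy
  have hyK : y ∈ Submodule.span ℝ (Set.range w) := by
    rw [hK]; exact (K.orthogonalProjectionOnto x).2
  obtain ⟨c, hc⟩ := (Submodule.mem_span_range_iff_exists_fun ℝ).1 hyK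
  have hx : x = (x - y) + ∑ i, c i • w i := by rw [hc]; abel
  have horth : ∀ i, (inner ℝ (w i) (x - y) : ℝ) = 0 := by
    intro i
    have hmem : x - y ∈ Kᗮ := K.sub_starProjection_mem_orthogonal x
    refine (Submodule.mem_orthogonal K (x - y)).1 hmem (w i) ?_
    rw [← hK]
    exact Submodule.subset_span (Set.mem_range_self i)
  calc gram (Fin.snoc w x) = gram (Fin.snoc w ((x - y) + ∑ i, c i • w i)) := by rw [← hx]
    _ = gram (Fin.snoc w (x - y)) := gram_snoc_add_combo w (x - y) c
    _ = gram w * ‖x - y‖ ^ 2 := gram_snoc_orthogonal w (x - y) horth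

lemma gram_nonneg [CompleteSpace H] : ∀ {n : ℕ} (w : Fin n → H), 0 ≤ gram w := by
  intro n
  induction n with
  | zero => intro w; rw [_root_.gram, Matrix.det_fin_zero]; norm_num
  | succ m ih =>
    intro w
    haveI : FiniteDimensional ℝ (Submodule.span ℝ (Set.range (Fin.init w))) :=
      FiniteDimensional.span_of_finite ℝ (Set.finite_range _)
    rw [← Fin.snoc_init_self w, gram_snoc (Fin.init w) (w (Fin.last m)) rfl]
    exact mul_nonneg (ih _) (sq_nonneg _)

lemma gram_append_le [CompleteSpace H] {s N : ℕ} (f : Fin s → H) (hf : Orthonormal ℝ f)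
    (v : Fin N → H) (hfv : ∀ i, f i ∈ Submodule.span ℝ (Set.range v)) :
    ∀ (m : ℕ) (u : Fin m → H),
      gram (Fin.append v u) ≤ gram v * gram (Fin.append f u) := by
  intro m
  induction m with
  | zero =>
    intro u
    have hu : u = Fin.elim0 := funext fun i => i.elim0
    subst hu
    rw [Fin.append_elim0, Fin.append_elim0]
    have h1 : gram (v ∘ Fin.cast (Nat.add_zero N)) = gram v :=
      gram_comp_equiv (finCongr (Nat.add_zero N)) v
    have h2 : gram (f ∘ Fin.cast (Nat.add_zero s)) = gram f :=
      gram_comp_equiv (finCongr (Nat.add_zero s)) f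
    rw [h1, h2, gram_orthonormal hf, mul_one]
  | succ m ih =>
    intro u
    set A := Submodule.span ℝ (Set.range (Fin.append f (Fin.init u))) with hA
    set B := Submodule.span ℝ (Set.range (Fin.append v (Fin.init u))) with hB
    haveI : FiniteDimensional ℝ A := FiniteDimensional.span_of_finite ℝ (Set.finite_range _)
    haveI : FiniteDimensional ℝ B := FiniteDimensional.span_of_finite ℝ (Set.finite_range _)
    set x := u (Fin.last m) with hxdef
    have h1 : Fin.append v u = Fin.snoc (Fin.append v (Fin.init u)) x := by
      rw [← Fin.append_snoc, Fin.snoc_init_self]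
    have h2 : Fin.append f u = Fin.snoc (Fin.append f (Fin.init u)) x := by
      rw [← Fin.append_snoc, Fin.snoc_init_self]
    have hvB : Submodule.span ℝ (Set.range v) ≤ B := by
      rw [hB]
      apply Submodule.span_mono
      rintro y ⟨j, rfl⟩
      exact ⟨Fin.castAdd m j, Fin.append_left v (Fin.init u) j⟩
    have hAB : A ≤ B := by
      rw [hA, Submodule.span_le]
      rintro y ⟨i, rfl⟩
      refine Fin.addCases (fun i => ?_) (fun i => ?_) i
      · rw [Fin.append_left]
        exact hvB (hfv i)
      · rw [Fin.append_right]
        exact Submodule.subset_span ⟨Fin.natAdd N i, Fin.append_right v (Fin.init u) i⟩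
    have hproj : ‖x - (B.orthogonalProjectionOnto x : H)‖ ≤ ‖x - (A.orthogonalProjectionOnto x : H)‖ := by
      rw [← Submodule.starProjection_apply, Submodule.starProjection_minimal]
      refine ciInf_le ⟨0, ?_⟩ (⟨(A.orthogonalProjectionOnto x : H),
        hAB (A.orthogonalProjectionOnto x).2⟩ : B)
      rintro r ⟨y, rfl⟩
      exact norm_nonneg _
    rw [h1, h2, gram_snoc _ x hB.symm, gram_snoc _ x hA.symm, ← mul_assoc]
    exact mul_le_mul (ih (Fin.init u))
      (pow_le_pow_left₀ (norm_nonneg _) hproj 2) (sq_nonneg _)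
      (mul_nonneg (gram_nonneg v) (gram_nonneg _))

end GramLemmas

lemma inner_ind (a b c d : ℝ) :
    (inner ℝ (ind a b) (ind c d) : ℝ) = (μ01 (Set.Icc c d ∩ Set.Icc a b)).toReal := by
  rw [ind, ind, MeasureTheory.L2.inner_indicatorConstLp_eq_setIntegral_inner]
  simp_rw [RCLike.inner_apply, _root_.map_one, mul_one]
  rw [setIntegral_indicatorConstLp measurableSet_Icc, smul_eq_mul, mul_one, measureReal_def]

lemma μ01_Icc (a b : ℝ) (ha : 0 ≤ a) (hb : b ≤ 1) :
    μ01 (Set.Icc a b) = ENNReal.ofReal (b - a) := by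
  rw [μ01, Measure.restrict_apply measurableSet_Icc,
    Set.inter_eq_left.2 (Set.Icc_subset_Icc ha hb), Real.volume_Icc]

lemma μ01_inter_zero {a b c d : ℝ} (h : b ≤ c ∨ d ≤ a) :
    (μ01 (Set.Icc a b ∩ Set.Icc c d)).toReal = 0 := by
  have hle : μ01 (Set.Icc a b ∩ Set.Icc c d) ≤ volume (Set.Icc a b ∩ Set.Icc c d) :=
    Measure.restrict_apply_le _ _
  have hz : volume (Set.Icc a b ∩ Set.Icc c d) = 0 := by
    rw [Set.Icc_inter_Icc, Real.volume_Icc]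
    rcases h with h | h
    · exact ENNReal.ofReal_eq_zero.2 (by
        have : min b d ≤ c := le_trans (min_le_left _ _) h
        have : min b d - max a c ≤ 0 := by
          have := le_max_right a c; linarith [min_le_left b d]
        linarith [sub_nonpos.2 (le_trans (min_le_left b d) (h.trans (le_max_right a c)))])
    · exact ENNReal.ofReal_eq_zero.2
        (sub_nonpos.2 (le_trans (min_le_right b d) (h.trans (le_max_left a c))))
  rw [le_antisymm (hle.trans_eq hz) zero_le]
  rfl

/-- Lemma 8. Let `0 ≤ s₁ < … < s_N ≤ 1` (here `N + 1` points `sp`)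
and let `f₁,…,f_s` be an orthonormal family contained in the span of
`𝟙_{[s₁,s₂]},…,𝟙_{[s_{N-1},s_N]}`. Then for every `k ≥ 2` there is a `c > 0`, depending
on the `s_j`, such that for all `(t₁,…,t_k) ∈ Δ_k`,
`G(𝟙_{[t₁,t₂]},…,𝟙_{[t_{k-1},t_k]}, f₁,…,f_s) ≥
c·G(𝟙_{[t₁,t₂]},…,𝟙_{[t_{k-1},t_k]}, 𝟙_{[s₁,s₂]},…,𝟙_{[s_{N-1},s_N]})`. -/
theorem gram_with_step_basis_ge
    {N : ℕ} (sp : Fin (N + 1) → ℝ) (h0 : 0 ≤ sp 0) (hmono : StrictMono sp)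
    (h1 : sp (Fin.last N) ≤ 1)
    {s : ℕ} (f : Fin s → L2) (hf : Orthonormal ℝ f)
    (hfspan : ∀ i, f i ∈ Submodule.span ℝ
      (Set.range fun j : Fin N => ind (sp j.castSucc) (sp j.succ)))
    (k : ℕ) :
    ∃ c : ℝ, 0 < c ∧ ∀ t : Fin (k + 2) → ℝ,
      0 ≤ t 0 → t (Fin.last (k + 1)) ≤ 1 → Monotone t →
      c * gram (Fin.append (fun j : Fin (k + 1) => ind (t j.castSucc) (t j.succ))
            (fun j : Fin N => ind (sp j.castSucc) (sp j.succ))) ≤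
        gram (Fin.append (fun j : Fin (k + 1) => ind (t j.castSucc) (t j.succ)) f) := by
  classical
  set v : Fin N → L2 := fun j => ind (sp j.castSucc) (sp j.succ) with hv
  have hdiag : (Matrix.of fun i j => (inner ℝ (v i) (v j) : ℝ))
      = Matrix.diagonal (fun j : Fin N => sp j.succ - sp j.castSucc) := by
    ext i j
    rcases eq_or_ne i j with rfl | hij
    · rw [Matrix.of_apply, Matrix.diagonal_apply_eq, hv, inner_ind, Set.inter_self,
        μ01_Icc _ _ (h0.trans (hmono.monotone (Fin.zero_le _)))
          ((hmono.monotone (Fin.le_last _)).trans h1),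
        ENNReal.toReal_ofReal (sub_nonneg.2 (hmono.monotone (Fin.castSucc_lt_succ (i := i)).le))]
    · rw [Matrix.of_apply, Matrix.diagonal_apply_ne _ hij, hv, inner_ind]
      rcases lt_or_gt_of_ne hij with h | h
      · refine μ01_inter_zero (Or.inr ?_)
        refine hmono.monotone ?_
        simp only [Fin.le_def, Fin.val_succ, Fin.coe_castSucc]
        exact Fin.lt_def.1 h
      · refine μ01_inter_zero (Or.inl ?_)
        refine hmono.monotone ?_
        simp only [Fin.le_def, Fin.val_succ, Fin.coe_castSucc]
        exact Fin.lt_def.1 h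
  have hgv : gram v = ∏ j : Fin N, (sp j.succ - sp j.castSucc) := by
    rw [_root_.gram, hdiag, Matrix.det_diagonal]
  have hvpos : 0 < gram v := by
    rw [hgv]
    exact Finset.prod_pos fun j _ => sub_pos.2 (hmono (Fin.castSucc_lt_succ (i := j)))
  refine ⟨(gram v)⁻¹, inv_pos.2 hvpos, ?_⟩
  intro t _ _ _
  set u : Fin (k + 1) → L2 := fun j => ind (t j.castSucc) (t j.succ) with hu
  have h := gram_append_le f hf v hfspan (k + 1) u
  rw [gram_append_comm u v, gram_append_comm u f]
  rw [inv_mul_le_iff₀ hvpos]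
  exact h
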